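/- Suppose each pair of distinct elements of a finite set W of size n ≥ R(m,m,m) is assigned an ordered relation: for each pair {x,y} there exist k ∈ {1,2,3} such that x →_k y or y →_k x, and each relation →_k satisfies: if x →_k y, y →_k z, and (x →_k z or z →_k x), then x →_k z. Then there exists a sequence x_1, ..., x_m of distinct elements of W and a single k such that x_i →_k x_j for all i < j. -/
import Mathlib


/-- `r` has the 3-color Ramsey property for `m`. -/
def RamseyProp (m r : ℕ) : Prop :=
  ∀ c : Fin r → Fin r → Fin 3, (∀ x y, c x y = c y x) →
    ∃ (S : Finset (Fin r)) (k : Fin 3), S.card = m ∧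
      ∀ x ∈ S, ∀ y ∈ S, x ≠ y → c x y = k

theorem exists_min_elt {α : Type*} [DecidableEq α] (r : α → α → Prop) :
    ∀ S : Finset α, S.Nonempty →
    (∀ x ∈ S, ∀ y ∈ S, x ≠ y → r x y ∨ r y x) →
    (∀ x ∈ S, ∀ y ∈ S, ∀ z ∈ S, x ≠ z → r x y → r y z → r x z) →
    ∃ x ∈ S, ∀ y ∈ S, y ≠ x → r x y := by
  intro S
  induction S using Finset.induction_on with
  | empty => intro h; exact absurd h (by simp)
  | @insert a s ha ih =>
    intro _ htot htr
    rcases s.eq_empty_or_nonempty with rfl | hs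
    · exact ⟨a, by simp, by simp⟩
    · obtain ⟨x, hxs, hxmin⟩ := ih hs
        (fun u hu v hv => htot u (Finset.mem_insert_of_mem hu) v (Finset.mem_insert_of_mem hv))
        (fun u hu v hv w hw => htr u (Finset.mem_insert_of_mem hu) v
          (Finset.mem_insert_of_mem hv) w (Finset.mem_insert_of_mem hw))
      have hax : a ≠ x := fun h => ha (h ▸ hxs)
      rcases htot a (Finset.mem_insert_self a s) x (Finset.mem_insert_of_mem hxs) hax with h1 | h1
      · -- a is min
        refine ⟨a, Finset.mem_insert_self a s, ?_⟩
        intro y hy hya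
        rcases Finset.mem_insert.mp hy with rfl | hys
        · exact absurd rfl hya
        · by_cases hyx : y = x
          · exact hyx ▸ h1
          · have hay : a ≠ y := fun h => ha (h ▸ hys)
            exact htr a (Finset.mem_insert_self a s) x (Finset.mem_insert_of_mem hxs)
              y (Finset.mem_insert_of_mem hys) hay h1 (hxmin y hys hyx)
      · -- x is still min
        refine ⟨x, Finset.mem_insert_of_mem hxs, ?_⟩
        intro y hy hyx
        rcases Finset.mem_insert.mp hy with rfl | hys
        · exact h1
        · exact hxmin y hys hyx

theorem exists_chain {α : Type*} [DecidableEq α] (r : α → α → Prop) :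
    ∀ (n : ℕ) (S : Finset α), S.card = n →
    (∀ x ∈ S, ∀ y ∈ S, x ≠ y → r x y ∨ r y x) →
    (∀ x ∈ S, ∀ y ∈ S, ∀ z ∈ S, x ≠ z → r x y → r y z → r x z) →
    ∃ l : List α, l.Nodup ∧ l.length = n ∧ (∀ x ∈ l, x ∈ S) ∧ l.Pairwise r := by
  intro n
  induction n with
  | zero => intro S hS _ _; exact ⟨[], by simp, by simp, by simp, by simp⟩
  | succ n ih =>
    intro S hS htot htr
    have hne : S.Nonempty := Finset.card_pos.mp (by omega)
    obtain ⟨x, hxS, hxmin⟩ := exists_min_elt r S hne htot htr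
    have hcard : (S.erase x).card = n := by
      rw [Finset.card_erase_of_mem hxS, hS]; omega
    obtain ⟨l, hnd, hlen, hmem, hpw⟩ := ih (S.erase x) hcard
      (fun u hu v hv => htot u (Finset.mem_of_mem_erase hu) v (Finset.mem_of_mem_erase hv))
      (fun u hu v hv w hw => htr u (Finset.mem_of_mem_erase hu) v
        (Finset.mem_of_mem_erase hv) w (Finset.mem_of_mem_erase hw))
    refine ⟨x :: l, ?_, by simp [hlen], ?_, ?_⟩
    · refine List.nodup_cons.mpr ⟨fun hx => ?_, hnd⟩
      exact (Finset.ne_of_mem_erase (hmem x hx)) rfl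
    · intro y hy
      rcases List.mem_cons.mp hy with rfl | hyl
      · exact hxS
      · exact Finset.mem_of_mem_erase (hmem y hyl)
    · refine List.pairwise_cons.mpr ⟨fun y hy => ?_, hpw⟩
      exact hxmin y (Finset.mem_of_mem_erase (hmem y hy)) (Finset.ne_of_mem_erase (hmem y hy))

/-- Lemma 4.5 (abstract form): if every pair of distinct elements of a finite
set `W` with `|W| ≥ R(m,m,m)` is related in some direction by one of three
weakly transitive relations, then there is a sequence of `m` distinct elements
of `W` linearly ordered by a single relation. -/
theorem exists_tail_biting_sequence {α : Type*} [DecidableEq α]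
    (m R : ℕ) (hR : IsLeast {r : ℕ | RamseyProp m r} R)
    (W : Finset α) (hW : R ≤ W.card)
    (rel : Fin 3 → α → α → Prop)
    (htot : ∀ x ∈ W, ∀ y ∈ W, x ≠ y → ∃ k : Fin 3, rel k x y ∨ rel k y x)
    (htrans : ∀ k : Fin 3, ∀ x ∈ W, ∀ y ∈ W, ∀ z ∈ W,
      rel k x y → rel k y z → (rel k x z ∨ rel k z x) → rel k x z) :
    ∃ (l : List α) (k : Fin 3), l.Nodup ∧ l.length = m ∧
      (∀ x ∈ l, x ∈ W) ∧ l.Pairwise (rel k) := by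
  classical
  obtain ⟨T, hTW, hTcard⟩ := Finset.exists_subset_card_eq hW
  set f : Fin R → α := fun i => (T.equivFin.symm (Fin.cast hTcard.symm i) : α) with hf
  have hfT : ∀ i, f i ∈ T := fun i => (T.equivFin.symm (Fin.cast hTcard.symm i)).2
  have hfW : ∀ i, f i ∈ W := fun i => hTW (hfT i)
  have hfinj : Function.Injective f := by
    intro i j h
    have := Subtype.ext h
    have := T.equivFin.symm.injective this
    exact Fin.cast_injective _ this
  -- choice function for colors
  set g : α → α → Fin 3 := fun x y =>
    if h : x ∈ W ∧ y ∈ W ∧ x ≠ y then (htot x h.1 y h.2.1 h.2.2).choose else 0 with hg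
  have hgspec : ∀ x ∈ W, ∀ y ∈ W, x ≠ y → rel (g x y) x y ∨ rel (g x y) y x := by
    intro x hx y hy hxy
    have : g x y = (htot x hx y hy hxy).choose := dif_pos ⟨hx, hy, hxy⟩
    rw [this]
    exact (htot x hx y hy hxy).choose_spec
  set c : Fin R → Fin R → Fin 3 := fun i j => if i ≤ j then g (f i) (f j) else g (f j) (f i)
    with hc
  have hcsym : ∀ i j, c i j = c j i := by
    intro i j
    rcases lt_trichotomy i j with h | rfl | h
    · simp [hc, le_of_lt h, not_le.mpr h]
    · rfl
    · simp [hc, le_of_lt h, not_le.mpr h]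
  have hcspec : ∀ i j, i ≠ j → rel (c i j) (f i) (f j) ∨ rel (c i j) (f j) (f i) := by
    intro i j hij
    have hfij : f i ≠ f j := fun h => hij (hfinj h)
    rcases le_or_gt i j with h | h
    · have : c i j = g (f i) (f j) := by simp [hc, h]
      rw [this]
      exact hgspec (f i) (hfW i) (f j) (hfW j) hfij
    · have : c i j = g (f j) (f i) := by simp [hc, not_le.mpr h]
      rw [this]
      rcases hgspec (f j) (hfW j) (f i) (hfW i) hfij.symm with h1 | h1
      · exact Or.inr h1
      · exact Or.inl h1
  obtain ⟨S, k, hScard, hSmono⟩ := hR.1 c hcsym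
  set S' : Finset α := S.image f with hS'
  have hS'card : S'.card = m := by
    rw [hS', Finset.card_image_of_injective S hfinj, hScard]
  have hS'W : ∀ x ∈ S', x ∈ W := by
    intro x hx
    obtain ⟨i, _, rfl⟩ := Finset.mem_image.mp hx
    exact hfW i
  have htot' : ∀ x ∈ S', ∀ y ∈ S', x ≠ y → rel k x y ∨ rel k y x := by
    intro x hx y hy hxy
    obtain ⟨i, hiS, rfl⟩ := Finset.mem_image.mp hx
    obtain ⟨j, hjS, rfl⟩ := Finset.mem_image.mp hy
    have hij : i ≠ j := fun h => hxy (by rw [h])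
    have := hcspec i j hij
    rwa [hSmono i hiS j hjS hij] at this
  have htr' : ∀ x ∈ S', ∀ y ∈ S', ∀ z ∈ S', x ≠ z → rel k x y → rel k y z → rel k x z := by
    intro x hx y hy z hz hxz hxy hyz
    exact htrans k x (hS'W x hx) y (hS'W y hy) z (hS'W z hz) hxy hyz (htot' x hx z hz hxz)
  obtain ⟨l, hnd, hlen, hmem, hpw⟩ := exists_chain (rel k) m S' hS'card htot' htr'
  exact ⟨l, k, hnd, hlen, fun x hx => hS'W x (hmem x hx), hpw⟩
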